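/- Let d ≥ 1 and q, Q, (a_n) be as follows: q : (0,∞) → (0,∞) continuous with q(t) = (d/2)^{d/2} π^{-d/2} t^{-d/2-1} + O(t^{-d/2-2}), Q(n) = ∫_{2n}^{2n+2} q(t) dt, a_1 = (2π)^{-1}((d/2)∫_2^∞ q)^{-2/d}, and a_n^{-d/2} − a_{n+1}^{-d/2} = (2π)^{d/2}(d/2)Q(n). Then there exists a constant C = C(d) such that |a_n − 2n/d| ≤ C for all n ≥ 1. -/

import Mathlib

open Real Filter Asymptotics MeasureTheory Set

open Topology

/-- Lemma 3.1 of the paper: With `Q(n) = ∫_{2n}^{2n+2} q(t) dt`,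
`a_1 = (2π)^{-1} ((d/2) ∫_2^∞ q)^{-2/d}` and
`a_n^{-d/2} - a_{n+1}^{-d/2} = (2π)^{d/2} (d/2) Q(n)`, one has
`|a_n - 2n/d| ≤ C(d)` for all `n ≥ 1`. -/
theorem an_key_asymptotics (d : ℕ) (hd : 1 ≤ d) (q : ℝ → ℝ)
    (hq_pos : ∀ t > (0:ℝ), 0 < q t) (hq_cont : ContinuousOn q (Ioi 0))
    (hq_asymp : (fun t : ℝ =>
        q t - ((d : ℝ) / 2) ^ ((d : ℝ) / 2) * π ^ (-(d : ℝ) / 2) * t ^ (-(d : ℝ) / 2 - 1))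
      =O[atTop] fun t : ℝ => t ^ (-(d : ℝ) / 2 - 2))
    (Q : ℕ → ℝ) (hQ : ∀ n : ℕ, Q n = ∫ t in (2 * (n : ℝ))..(2 * (n : ℝ) + 2), q t)
    (a : ℕ → ℝ) (ha_pos : ∀ n ≥ 1, 0 < a n)
    (ha1 : a 1 = (2 * π)⁻¹ * (((d : ℝ) / 2) * ∫ t in Ici (2 : ℝ), q t) ^ (-(2 : ℝ) / d))
    (ha_rec : ∀ n ≥ 1,
      a n ^ (-(d : ℝ) / 2) - a (n + 1) ^ (-(d : ℝ) / 2)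
        = (2 * π) ^ ((d : ℝ) / 2) * ((d : ℝ) / 2) * Q n) :
    ∃ C : ℝ, ∀ n ≥ 1, |a n - 2 * (n : ℝ) / (d : ℝ)| ≤ C := by
  have hπ := Real.pi_pos
  have hd0 : (0:ℝ) < d := by exact_mod_cast hd
  set p : ℝ := (d : ℝ) / 2 with hp_def
  have hp : 0 < p := by positivity
  have hnp : -(d : ℝ) / 2 = -p := neg_div 2 (d : ℝ)
  rw [hnp] at hq_asymp
  simp only [hnp] at ha_rec
  set K : ℝ := p ^ p * π ^ (-p) with hK_def
  set m : ℝ → ℝ := fun t => K * t ^ (-p - 1) with hm_def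
  set c : ℝ := (2 * π) ^ p * p with hc_def
  have hc0 : 0 < c := by positivity
  set I : ℝ → ℝ := fun x => ∫ t in Ioi x, q t with hI_def
  -- constants from the big-O hypothesis
  obtain ⟨C, hC⟩ := hq_asymp.isBigOWith
  rw [isBigOWith_iff] at hC
  obtain ⟨T, hT⟩ := hC.exists_forall_of_atTop
  -- replace C by |C|
  have hT' : ∀ t ≥ max T 2, |q t - m t| ≤ |C| * t ^ (-p - 2) := by
    intro t ht
    have ht2 : (2:ℝ) ≤ t := le_trans (le_max_right _ _) ht
    have htpos : (0:ℝ) < t := by linarith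
    have := hT t (le_trans (le_max_left _ _) ht)
    have hnorm : ‖t ^ (-p - 2)‖ = t ^ (-p - 2) := by
      rw [Real.norm_eq_abs, abs_of_nonneg (Real.rpow_nonneg htpos.le _)]
    calc |q t - m t| = ‖q t - m t‖ := (Real.norm_eq_abs _).symm
      _ ≤ C * ‖t ^ (-p - 2)‖ := this
      _ ≤ |C| * ‖t ^ (-p - 2)‖ := by
          apply mul_le_mul_of_nonneg_right (le_abs_self C) (norm_nonneg _)
      _ = |C| * t ^ (-p - 2) := by rw [hnorm]
  set T0 : ℝ := max T 2 with hT0_def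
  have hT02 : (2:ℝ) ≤ T0 := le_max_right _ _
  have hT00 : (0:ℝ) < T0 := by linarith
  -- continuity of m on positive reals
  have hm_cont : ∀ s : Set ℝ, s ⊆ Ioi 0 → ContinuousOn m s := by
    intro s hs
    apply continuousOn_const.mul
    intro t ht
    exact (Real.continuousAt_rpow_const t _ (Or.inl (ne_of_gt (hs ht)))).continuousWithinAt
  -- integrability of q on tails
  have hqint : ∀ x ≥ (2:ℝ), IntegrableOn q (Ioi x) := by
    intro x hx
    have hx0 : (0:ℝ) < x := by linarith
    set T1 : ℝ := max x T0 with hT1_def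
    have hT1x : x ≤ T1 := le_max_left _ _
    have hT10 : (0:ℝ) < T1 := lt_of_lt_of_le hx0 hT1x
    rw [← Ioc_union_Ioi_eq_Ioi hT1x, integrableOn_union]
    constructor
    · have hcont : ContinuousOn q (Icc x T1) := hq_cont.mono (fun t ht => lt_of_lt_of_le hx0 ht.1)
      exact (hcont.integrableOn_Icc).mono_set Ioc_subset_Icc_self
    · have hsub : Ioi T1 ⊆ Ioi (0:ℝ) := fun t ht => lt_trans hT10 ht
      have hm_int : IntegrableOn m (Ioi T1) := by
        exact (integrableOn_Ioi_rpow_of_lt (by linarith : -p - 1 < -1) hT10).const_mul K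
      have hg_int : IntegrableOn (fun t : ℝ => |C| * t ^ (-p - 2)) (Ioi T1) := by
        exact (integrableOn_Ioi_rpow_of_lt (by linarith : -p - 2 < -1) hT10).const_mul |C|
      have hsub_meas : AEStronglyMeasurable (fun t => q t - m t) (volume.restrict (Ioi T1)) :=
        ((hq_cont.mono hsub).sub (hm_cont _ hsub)).aestronglyMeasurable measurableSet_Ioi
      have hdiff_int : IntegrableOn (fun t => q t - m t) (Ioi T1) := by
        refine hg_int.mono' hsub_meas ?_
        rw [ae_restrict_iff' measurableSet_Ioi]
        refine ae_of_all _ fun t ht => ?_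
        have htT0 : T0 ≤ t := le_trans (le_max_right x T0) ht.le
        simpa [Real.norm_eq_abs] using hT' t htT0
      have : IntegrableOn (fun t => (q t - m t) + m t) (Ioi T1) := hdiff_int.add hm_int
      exact this.congr_fun (fun t _ => by ring) measurableSet_Ioi
  -- splitting of the tail integral
  have hsplit : ∀ x y : ℝ, 2 ≤ x → x ≤ y → I x = (∫ t in x..y, q t) + I y := by
    intro x y hx hxy
    rw [intervalIntegral.integral_of_le hxy]
    have h1 : IntegrableOn q (Ioc x y) := ((hqint x hx).mono_set Ioc_subset_Ioi_self)
    have h2 : IntegrableOn q (Ioi y) := hqint y (le_trans hx hxy)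
    have : I x = ∫ t in Ioc x y ∪ Ioi y, q t := by
      rw [Ioc_union_Ioi_eq_Ioi hxy]
    rw [this, setIntegral_union (Ioc_disjoint_Ioi le_rfl) measurableSet_Ioi h1 h2]
  -- nonnegativity of I
  have hInn : ∀ x ≥ (2:ℝ), 0 ≤ I x := by
    intro x hx
    apply setIntegral_nonneg measurableSet_Ioi
    intro t ht
    exact (hq_pos t (lt_trans (by linarith) ht)).le
  -- telescoping: a n ^ (-p) = c * I (2n)
  have hb : ∀ n : ℕ, 1 ≤ n → a n ^ (-p) = c * I (2 * (n:ℝ)) := by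
    have hbase : a 1 ^ (-p) = c * I 2 := by
      have hJ : (∫ t in Ici (2:ℝ), q t) = I 2 := integral_Ici_eq_integral_Ioi
      have hJnn : 0 ≤ p * I 2 := mul_nonneg hp.le (hInn 2 le_rfl)
      have hexp : (-(2:ℝ)/d) * (-p) = 1 := by
        rw [hp_def]; field_simp
      rw [ha1, hJ, Real.mul_rpow (by positivity) (Real.rpow_nonneg hJnn _),
        Real.inv_rpow (by positivity), ← Real.rpow_neg (by positivity), neg_neg,
        ← Real.rpow_mul hJnn, hexp, Real.rpow_one, hc_def]
      ring
    intro n hn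
    induction n, hn using Nat.le_induction with
    | base => simpa using hbase
    | succ n hn ih =>
      have hn1 : (1:ℝ) ≤ (n:ℝ) := by exact_mod_cast hn
      have h2n : (2:ℝ) ≤ 2 * (n:ℝ) := by linarith
      have hQn : Q n = I (2 * (n:ℝ)) - I (2 * (n:ℝ) + 2) := by
        have := hsplit (2*(n:ℝ)) (2*(n:ℝ)+2) h2n (by linarith)
        rw [hQ n]; linarith
      have hrec := ha_rec n hn
      have hcast : (2:ℝ) * ((n:ℕ) + 1 : ℕ) = 2 * (n:ℝ) + 2 := by push_cast; ring
      rw [hcast]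
      have : a (n+1) ^ (-p) = a n ^ (-p) - c * Q n := by linarith
      rw [this, ih, hQn]; ring
  -- value of the main-term tail integral
  have hmint : ∀ x : ℝ, 0 < x → ∫ t in Ioi x, m t = K * (x ^ (-p) / p) := by
    intro x hx0
    rw [hm_def]
    rw [MeasureTheory.integral_const_mul, integral_Ioi_rpow_of_lt (by linarith : -p - 1 < -1) hx0,
      show (-p - 1 + 1 : ℝ) = -p by ring]
    rw [neg_div_neg_eq]
  -- tail error bound
  have hEbd : ∀ x ≥ T0, |I x - K * (x ^ (-p) / p)| ≤ (|C| / (p + 1)) * x ^ (-p - 1) := by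
    intro x hx
    have hx0 : (0:ℝ) < x := lt_of_lt_of_le hT00 hx
    have hx2 : (2:ℝ) ≤ x := le_trans hT02 hx
    have hqi := hqint x hx2
    have hmi : IntegrableOn m (Ioi x) :=
      (integrableOn_Ioi_rpow_of_lt (by linarith : -p - 1 < -1) hx0).const_mul K
    have hgi : IntegrableOn (fun t : ℝ => |C| * t ^ (-p - 2)) (Ioi x) :=
      (integrableOn_Ioi_rpow_of_lt (by linarith : -p - 2 < -1) hx0).const_mul |C|
    have h1 : I x - K * (x ^ (-p) / p) = ∫ t in Ioi x, (q t - m t) := by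
      rw [integral_sub hqi hmi, hmint x hx0]
    have h2 : |∫ t in Ioi x, (q t - m t)| ≤ ∫ t in Ioi x, |C| * t ^ (-p - 2) := by
      calc |∫ t in Ioi x, (q t - m t)| ≤ ∫ t in Ioi x, |q t - m t| :=
            by simpa [Real.norm_eq_abs] using
              MeasureTheory.norm_integral_le_integral_norm (μ := volume.restrict (Ioi x))
                (fun t => q t - m t)
        _ ≤ ∫ t in Ioi x, |C| * t ^ (-p - 2) := by
            refine setIntegral_mono_on ((hqi.sub hmi).abs) hgi measurableSet_Ioi ?_
            exact fun t ht => hT' t (le_trans hx ht.le)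
    have h3 : ∫ t in Ioi x, |C| * t ^ (-p - 2) = (|C| / (p + 1)) * x ^ (-p - 1) := by
      rw [MeasureTheory.integral_const_mul, integral_Ioi_rpow_of_lt (by linarith : -p - 2 < -1) hx0,
        show (-p - 2 + 1 : ℝ) = -p - 1 by ring]
      rw [show (-p - 1 : ℝ) = -(p + 1) by ring, div_neg, neg_div, neg_neg]
      ring
    rw [h1]
    exact le_trans h2 (le_of_eq h3)
  -- the ratio sequence
  set r : ℕ → ℝ := fun n => c * I (2 * (n:ℝ)) / ((d : ℝ) / (2 * (n:ℝ))) ^ p with hr_def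
  -- key computation : c * K / p = d ^ p etc.
  have hcK : c * K / p = (d:ℝ) ^ p := by
    have h1 : (2*π:ℝ)^p = 2^p * π^p := Real.mul_rpow (by norm_num) hπ.le
    have h2 : (2:ℝ)^p * p^p = (2*p)^p := (Real.mul_rpow (by norm_num) hp.le).symm
    have h3 : (2:ℝ)*p = (d:ℝ) := by rw [hp_def]; ring
    have h4 : π^p * π^(-p) = 1 := by
      rw [← Real.rpow_add hπ]; simp
    calc c * K / p = ((2:ℝ)^p * p^p) * (π^p * π^(-p)) := by
          rw [hc_def, hK_def, h1]; field_simp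
      _ = (2*p)^p := by rw [h4, mul_one, h2]
      _ = (d:ℝ)^p := by rw [h3]
  have hrbd : ∀ n : ℕ, (n:ℝ) ≥ T0 → |r n - 1| ≤ (c * (|C| / (p + 1)) / ((d:ℝ) ^ p * 2)) * (n:ℝ)⁻¹ := by
    intro n hn
    have hn0 : (0:ℝ) < n := lt_of_lt_of_le hT00 hn
    have hx0 : (0:ℝ) < 2 * (n:ℝ) := by positivity
    have hxT : 2 * (n:ℝ) ≥ T0 := le_trans hn (by linarith)
    have hxp : (0:ℝ) < (2*(n:ℝ)) ^ (-p) := Real.rpow_pos_of_pos hx0 _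
    have hdp : (0:ℝ) < (d:ℝ) ^ p := Real.rpow_pos_of_pos hd0 _
    have hD : ((d:ℝ)/(2*(n:ℝ)))^p = (d:ℝ)^p * (2*(n:ℝ))^(-p) := by
      rw [Real.div_rpow hd0.le hx0.le, Real.rpow_neg hx0.le, div_eq_mul_inv]
    have hmain : c * (K * ((2*(n:ℝ))^(-p)/p)) = (d:ℝ)^p * (2*(n:ℝ))^(-p) := by
      rw [← hcK]; ring
    have hne : (d:ℝ)^p * (2*(n:ℝ))^(-p) ≠ 0 := by positivity
    have hr1 : r n - 1
        = c * (I (2*(n:ℝ)) - K * ((2*(n:ℝ))^(-p)/p)) / ((d:ℝ)^p * (2*(n:ℝ))^(-p)) := by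
      have e1 : c * (I (2*(n:ℝ)) - K * ((2*(n:ℝ))^(-p)/p))
          = c * I (2*(n:ℝ)) - (d:ℝ)^p * (2*(n:ℝ))^(-p) := by
        rw [mul_sub, hmain]
      rw [e1, sub_div, div_self hne, hr_def]
      simp only
      rw [hD]
    have hxsplit : (2*(n:ℝ))^(-p-1) = (2*(n:ℝ))^(-p) * (2*(n:ℝ))⁻¹ := by
      rw [show (-p-1:ℝ) = -p + (-1) by ring, Real.rpow_add hx0, Real.rpow_neg_one]
    calc |r n - 1| = c * |I (2*(n:ℝ)) - K * ((2*(n:ℝ))^(-p)/p)| / ((d:ℝ)^p * (2*(n:ℝ))^(-p)) := by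
          rw [hr1, abs_div, abs_mul, abs_of_pos hc0, abs_of_pos (mul_pos hdp hxp)]
      _ ≤ c * ((|C|/(p+1)) * (2*(n:ℝ))^(-p-1)) / ((d:ℝ)^p * (2*(n:ℝ))^(-p)) := by
          gcongr
          exact hEbd _ hxT
      _ = (c * (|C|/(p+1)) / ((d:ℝ)^p * 2)) * (n:ℝ)⁻¹ := by
          rw [hxsplit]
          field_simp
  have hrO : (fun n : ℕ => r n - 1) =O[atTop] fun n : ℕ => (n:ℝ)⁻¹ := by
    rw [isBigO_iff]
    obtain ⟨N, hN⟩ := exists_nat_ge T0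
    refine ⟨c * (|C| / (p + 1)) / ((d:ℝ) ^ p * 2), eventually_atTop.2 ⟨N, fun n hn => ?_⟩⟩
    have hnT : (n:ℝ) ≥ T0 := le_trans hN (by exact_mod_cast hn)
    have hn0 : (0:ℝ) < n := lt_of_lt_of_le hT00 hnT
    rw [Real.norm_eq_abs, Real.norm_eq_abs, abs_of_pos (inv_pos.2 hn0)]
    exact hrbd n hnT
  have hrO' : (fun n : ℕ => r n - 1) =O[atTop] (fun n : ℕ => (n:ℝ)⁻¹) := hrO
  have hr_tendsto : Tendsto r atTop (𝓝 1) := by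
    have h0 : Tendsto (fun n : ℕ => r n - 1) atTop (𝓝 0) :=
      hrO.trans_tendsto tendsto_inv_atTop_nhds_zero_nat
    have := h0.add (tendsto_const_nhds (x := (1:ℝ)))
    simpa using this
  -- a n in terms of r n
  have ha_eq : ∀ n : ℕ, 1 ≤ n → a n = 2 * (n:ℝ) / (d:ℝ) * (r n) ^ (-(2:ℝ)/d) := by
    intro n hn
    have hn1 : (1:ℝ) ≤ (n:ℝ) := by exact_mod_cast hn
    have hx0 : (0:ℝ) < 2 * (n:ℝ) := by linarith
    have hdiv0 : (0:ℝ) < (d:ℝ) / (2*(n:ℝ)) := by positivity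
    have hD0 : (0:ℝ) < ((d:ℝ)/(2*(n:ℝ)))^p := Real.rpow_pos_of_pos hdiv0 _
    have hInn' : 0 ≤ I (2*(n:ℝ)) := hInn _ (by linarith)
    have hr_nn : 0 ≤ r n := by
      rw [hr_def]
      exact div_nonneg (mul_nonneg hc0.le hInn') hD0.le
    have hexp2 : (-p) * (-(2:ℝ)/d) = 1 := by rw [hp_def]; field_simp
    have h1 : a n = (c * I (2*(n:ℝ))) ^ (-(2:ℝ)/d) := by
      rw [← hb n hn, ← Real.rpow_mul (ha_pos n hn).le, hexp2, Real.rpow_one]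
    have h2 : c * I (2*(n:ℝ)) = ((d:ℝ)/(2*(n:ℝ)))^p * r n := by
      have hrn : r n = c * I (2*(n:ℝ)) / ((d:ℝ)/(2*(n:ℝ)))^p := rfl
      rw [hrn, mul_comm (((d:ℝ)/(2*(n:ℝ)))^p), div_mul_cancel₀ _ hD0.ne']
    have h3 : (((d:ℝ)/(2*(n:ℝ)))^p) ^ (-(2:ℝ)/d) = 2 * (n:ℝ) / (d:ℝ) := by
      rw [← Real.rpow_mul hdiv0.le, show p * (-(2:ℝ)/d) = -1 by rw [hp_def]; field_simp,
        Real.rpow_neg_one, inv_div]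
    rw [h1, h2, Real.mul_rpow hD0.le hr_nn, h3]
  have hfinal : (fun n : ℕ => a n - 2 * (n:ℝ) / (d:ℝ)) =O[atTop] (fun _ => (1:ℝ)) := by
    have heq : ∀ᶠ n : ℕ in atTop,
        2 * (n:ℝ) / (d:ℝ) * ((r n) ^ (-(2:ℝ)/d) - 1) = a n - 2 * (n:ℝ) / (d:ℝ) := by
      filter_upwards [eventually_ge_atTop 1] with n hn
      rw [ha_eq n hn]; ring
    have hder : HasDerivAt (fun x : ℝ => x ^ (-(2:ℝ)/(d:ℝ)))
        ((-(2:ℝ)/(d:ℝ)) * (1:ℝ) ^ ((-(2:ℝ)/(d:ℝ)) - 1)) 1 :=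
      Real.hasDerivAt_rpow_const (Or.inl one_ne_zero)
    have hO1 : (fun x : ℝ => x ^ (-(2:ℝ)/(d:ℝ)) - (1:ℝ) ^ (-(2:ℝ)/(d:ℝ))) =O[𝓝 1]
        fun x => x - 1 := hder.isBigO_sub
    have hO2 : (fun n : ℕ => (r n) ^ (-(2:ℝ)/(d:ℝ)) - 1) =O[atTop] fun n => r n - 1 := by
      have := hO1.comp_tendsto hr_tendsto
      simpa [Real.one_rpow, Function.comp_def] using this
    have hO3 : (fun n : ℕ => (r n) ^ (-(2:ℝ)/(d:ℝ)) - 1) =O[atTop] fun n : ℕ => (n:ℝ)⁻¹ :=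
      hO2.trans hrO
    have hO4 : (fun n : ℕ => 2 * (n:ℝ) / (d:ℝ)) =O[atTop] fun n : ℕ => (n:ℝ) := by
      rw [isBigO_iff]
      refine ⟨2, Eventually.of_forall fun n => ?_⟩
      rw [Real.norm_eq_abs, Real.norm_eq_abs, abs_of_nonneg (by positivity),
        abs_of_nonneg (n.cast_nonneg)]
      rw [div_le_iff₀ hd0]
      nlinarith [(Nat.cast_nonneg n : (0:ℝ) ≤ n), hd0, (by exact_mod_cast hd : (1:ℝ) ≤ d)]
    have hO5 : (fun n : ℕ => 2 * (n:ℝ) / (d:ℝ) * ((r n) ^ (-(2:ℝ)/(d:ℝ)) - 1)) =O[atTop]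
        fun n : ℕ => (n:ℝ) * (n:ℝ)⁻¹ := hO4.mul hO3
    have hO6 : (fun n : ℕ => (n:ℝ) * (n:ℝ)⁻¹) =O[atTop] (fun _ => (1:ℝ)) := by
      rw [isBigO_iff]
      refine ⟨1, Eventually.of_forall fun n => ?_⟩
      rcases Nat.eq_zero_or_pos n with h | h
      · simp [h]
      · have : (n:ℝ) ≠ 0 := Nat.cast_ne_zero.2 h.ne'
        simp [mul_inv_cancel₀ this]
    exact ((hO5.trans hO6).congr' heq EventuallyEq.rfl)
  obtain ⟨C₀, hC₀⟩ := isBigO_one_nat_atTop_iff.1 hfinal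
  exact ⟨C₀, fun n _ => by simpa [Real.norm_eq_abs] using hC₀ n⟩
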